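/- Let $C$ be a $d \times d$ complex correlation matrix of rank $r$. Then $\frac{1}{r} C + \frac{r-1}{r} I_d$ lies in the closed convex hull of rank-one correlation matrices $zz^*$ with all $|z_i| = 1$. -/

import Mathlib

open Matrix
open scoped ComplexOrder

/-- The set of rank-one correlation matrices. -/
def corrSet (d : ℕ) : Set (Matrix (Fin d) (Fin d) ℂ) :=
  {A : Matrix (Fin d) (Fin d) ℂ |
    ∃ z : Fin d → ℂ, (∀ i, ‖z i‖ = 1) ∧ A = Matrix.of fun i j => z i * star (z j)}

/-- The matrix with off-diagonal entries those of `v v*` and unit diagonal. -/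
def corrM {d : ℕ} (v : Fin d → ℂ) : Matrix (Fin d) (Fin d) ℂ :=
  Matrix.of fun i j => if i = j then 1 else v i * star (v j)

/-- Any complex number of norm at most one is the midpoint of two unimodular numbers. -/
lemma exists_unit_pair (c : ℂ) (hc : ‖c‖ ≤ 1) :
    ∃ a b : ℂ, ‖a‖ = 1 ∧ ‖b‖ = 1 ∧ a + b = 2 * c := by
  set u : ℂ := if c = 0 then 1 else c / ‖c‖ with hu
  have hun : ‖u‖ = 1 := by
    rw [hu]; split_ifs with h
    · simp
    · rw [norm_div, Complex.norm_real, Real.norm_eq_abs, abs_norm]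
      exact div_self (norm_ne_zero_iff.2 h)
  have hcu : (‖c‖ : ℂ) * u = c := by
    rw [hu]; split_ifs with h
    · simp [h]
    · have h0 : (‖c‖ : ℂ) ≠ 0 := by
        simpa using norm_ne_zero_iff.2 h
      rw [mul_comm, div_mul_cancel₀ c h0]
  set s : ℝ := Real.sqrt (1 - ‖c‖ ^ 2) with hs
  have hs2 : s ^ 2 = 1 - ‖c‖ ^ 2 := by
    rw [hs, Real.sq_sqrt]
    nlinarith [norm_nonneg c]
  have hnorm : ∀ t : ℝ, ‖((‖c‖ : ℂ) + t * Complex.I) * u‖ = Real.sqrt (‖c‖ ^ 2 + t ^ 2) := by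
    intro t
    rw [norm_mul, hun, mul_one]
    rw [Complex.norm_def, Complex.normSq_apply]
    simp [Complex.add_re, Complex.add_im]
    ring_nf
  refine ⟨((‖c‖ : ℂ) + s * Complex.I) * u, ((‖c‖ : ℂ) + (-s : ℝ) * Complex.I) * u, ?_, ?_, ?_⟩
  · rw [hnorm s]
    rw [show ‖c‖ ^ 2 + s ^ 2 = 1 by rw [hs2]; ring]
    exact Real.sqrt_one
  · rw [hnorm (-s)]
    rw [show ‖c‖ ^ 2 + (-s) ^ 2 = 1 by rw [neg_pow]; rw [hs2]; ring]
    exact Real.sqrt_one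
  · have h2 : ((‖c‖ : ℂ) + (s : ℝ) * Complex.I) * u + ((‖c‖ : ℂ) + ((-s : ℝ) : ℂ) * Complex.I) * u
        = 2 * ((‖c‖ : ℂ) * u) := by push_cast; ring
    rw [h2, hcu]

/-- If all entries of `v` are unimodular then `corrM v` is a rank-one correlation matrix. -/
lemma corrM_mem_corrSet {d : ℕ} (v : Fin d → ℂ) (hv : ∀ i, ‖v i‖ = 1) :
    corrM v ∈ corrSet d := by
  refine ⟨v, hv, ?_⟩
  ext i j
  simp only [corrM, Matrix.of_apply]
  split_ifs with h
  · subst h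
    rw [Complex.star_def, Complex.mul_conj, Complex.normSq_eq_norm_sq, hv i]
    norm_num
  · rfl

/-- Main induction: if entries of `v` are of norm at most one, then `corrM v` belongs
to the convex hull of the rank-one correlation matrices. -/
lemma corrM_mem_convexHull {d : ℕ} (v : Fin d → ℂ) (hv : ∀ i, ‖v i‖ ≤ 1) :
    corrM v ∈ convexHull ℝ (corrSet d) := by
  suffices H : ∀ (s : Finset (Fin d)) (w : Fin d → ℂ), (∀ i, ‖w i‖ ≤ 1) →
      (∀ i, i ∉ s → ‖w i‖ = 1) → corrM w ∈ convexHull ℝ (corrSet d) by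
    exact H Finset.univ v hv (fun i hi => absurd (Finset.mem_univ i) hi)
  intro s
  induction s using Finset.induction_on with
  | empty =>
    intro w _ hw1
    exact subset_convexHull ℝ _ (corrM_mem_corrSet w (fun i => hw1 i (by simp)))
  | @insert i s his ih =>
    intro w hw hw1
    obtain ⟨a, b, ha, hb, hab⟩ := exists_unit_pair (w i) (hw i)
    set w₁ := Function.update w i a with hw₁
    set w₂ := Function.update w i b with hw₂
    have h₁ : corrM w₁ ∈ convexHull ℝ (corrSet d) := by
      refine ih w₁ ?_ ?_
      · intro j
        rcases eq_or_ne j i with rfl | hj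
        · rw [hw₁, Function.update_self, ha]
        · rw [hw₁, Function.update_of_ne hj]; exact hw j
      · intro j hj
        rcases eq_or_ne j i with rfl | hji
        · rw [hw₁, Function.update_self]; exact ha
        · rw [hw₁, Function.update_of_ne hji]
          exact hw1 j (by simp [hji, hj])
    have h₂ : corrM w₂ ∈ convexHull ℝ (corrSet d) := by
      refine ih w₂ ?_ ?_
      · intro j
        rcases eq_or_ne j i with rfl | hj
        · rw [hw₂, Function.update_self, hb]
        · rw [hw₂, Function.update_of_ne hj]; exact hw j
      · intro j hj
        rcases eq_or_ne j i with rfl | hji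
        · rw [hw₂, Function.update_self]; exact hb
        · rw [hw₂, Function.update_of_ne hji]
          exact hw1 j (by simp [hji, hj])
    have key : corrM w = (1/2 : ℝ) • corrM w₁ + (1/2 : ℝ) • corrM w₂ := by
      ext p q
      simp only [corrM, Matrix.add_apply, Matrix.smul_apply, Matrix.of_apply,
        Complex.real_smul]
      push_cast
      split_ifs with h
      · norm_num
      · rcases eq_or_ne p i with rfl | hp
        · have hq : q ≠ p := Ne.symm h
          have h3 : a * star (w q) + b * star (w q) = 2 * w p * star (w q) := by
            rw [← add_mul, hab]
          simp only [hw₁, hw₂, Function.update_self, Function.update_of_ne hq]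
          linear_combination (-1/2 : ℂ) * h3
        · rcases eq_or_ne q i with rfl | hq
          · have hstar : star a + star b = 2 * star (w q) := by
              have := congrArg star hab
              simpa [star_add, star_mul'] using this
            have h3 : w p * star a + w p * star b = 2 * (w p * star (w q)) := by
              rw [← mul_add, hstar]; ring
            simp only [hw₁, hw₂, Function.update_self, Function.update_of_ne hp]
            linear_combination (-1/2 : ℂ) * h3
          · simp only [hw₁, hw₂, Function.update_of_ne hp, Function.update_of_ne hq]
            ring
    rw [key]
    exact (convex_convexHull ℝ (corrSet d)) h₁ h₂ (by norm_num) (by norm_num) (by norm_num)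

/-- If `C` is a `d × d` complex correlation matrix of rank `r`, then
`(1/r) C + ((r-1)/r) I` lies in the closed convex hull of the rank-one
correlation matrices `z z*` with all `|zᵢ| = 1`. -/
theorem rank_r_correlation_convex_combination (d r : ℕ)
    (C : Matrix (Fin d) (Fin d) ℂ) (hC : C.PosSemidef) (hdiag : ∀ i, C i i = 1)
    (hrank : C.rank = r) :
    (1 / (r : ℝ)) • C + (((r : ℝ) - 1) / r) • (1 : Matrix (Fin d) (Fin d) ℂ) ∈
      closure (convexHull ℝ {A : Matrix (Fin d) (Fin d) ℂ |
        ∃ z : Fin d → ℂ, (∀ i, ‖z i‖ = 1) ∧ A = Matrix.of fun i j => z i * star (z j)}) := by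
  have hH : C.IsHermitian := hC.1
  set U : Matrix (Fin d) (Fin d) ℂ := (hH.eigenvectorUnitary : Matrix (Fin d) (Fin d) ℂ) with hU
  set μ : Fin d → ℝ := hH.eigenvalues with hμ
  have hμ0 : ∀ k, 0 ≤ μ k := fun k => hC.eigenvalues_nonneg k
  have hCapp : ∀ i j, C i j = ∑ k, (μ k : ℂ) * (U i k * star (U j k)) := by
    intro i j
    conv_lhs => rw [hH.spectral_theorem, Unitary.conjStarAlgAut_apply]
    rw [Matrix.mul_apply]
    refine Finset.sum_congr rfl fun k _ => ?_
    rw [Matrix.mul_diagonal]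
    rw [Matrix.star_apply]
    simp only [Function.comp_apply, ← hμ, ← hU]
    rw [show (RCLike.ofReal (μ k) : ℂ) = ((μ k : ℝ) : ℂ) from rfl]
    ring
  set v : Fin d → Fin d → ℂ := fun k i => (Real.sqrt (μ k) : ℂ) * U i k with hv
  have hvv : ∀ k i j, v k i * star (v k j) = (μ k : ℂ) * (U i k * star (U j k)) := by
    intro k i j
    calc v k i * star (v k j)
        = ((Real.sqrt (μ k) : ℂ) * Real.sqrt (μ k)) * (U i k * star (U j k)) := by
          simp only [hv, star_mul', Complex.star_def, Complex.conj_ofReal]; ring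
      _ = (μ k : ℂ) * (U i k * star (U j k)) := by
          rw [← Complex.ofReal_mul, Real.mul_self_sqrt (hμ0 k)]
  have hsum : ∀ i j, ∑ k, v k i * star (v k j) = C i j := by
    intro i j
    rw [hCapp i j]
    exact Finset.sum_congr rfl fun k _ => hvv k i j
  have hdiag2 : ∀ i, ∑ k, Complex.normSq (v k i) = 1 := by
    intro i
    have h1 : ((∑ k, Complex.normSq (v k i) : ℝ) : ℂ) = 1 := by
      push_cast
      rw [show (∑ k, (Complex.normSq (v k i) : ℂ)) = ∑ k, v k i * star (v k i) from
        Finset.sum_congr rfl fun k _ => by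
          rw [Complex.star_def, Complex.mul_conj]]
      rw [hsum i i, hdiag i]
    exact_mod_cast h1
  have hle : ∀ k i, ‖v k i‖ ≤ 1 := by
    intro k i
    have h1 : Complex.normSq (v k i) ≤ 1 := by
      rw [← hdiag2 i]
      exact Finset.single_le_sum (fun l _ => Complex.normSq_nonneg (v l i))
        (Finset.mem_univ k)
    have h2 : ‖v k i‖ ^ 2 = Complex.normSq (v k i) := by
      rw [Complex.sq_norm]
    nlinarith [norm_nonneg (v k i)]
  have hzero : ∀ k, μ k = 0 → ∀ i, v k i = 0 := by
    intro k hk i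
    simp [hv, hk]
  classical
  set T : Finset (Fin d) := Finset.univ.filter (fun k => μ k ≠ 0) with hT
  have hTcard : T.card = r := by
    have h1 : C.rank = Fintype.card {k // μ k ≠ 0} := hH.rank_eq_card_non_zero_eigs
    rw [hrank] at h1
    rw [hT, ← Fintype.card_subtype]
    exact h1.symm
  rcases Nat.eq_zero_or_pos r with hr | hr
  · -- r = 0 : then all eigenvalues vanish, forcing d = 0
    subst hr
    have hTe : T = ∅ := Finset.card_eq_zero.mp hTcard
    have hall : ∀ k, μ k = 0 := by
      intro k
      by_contra hk
      have : k ∈ T := by simp [hT, hk]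
      rw [hTe] at this
      exact absurd this (Finset.notMem_empty k)
    have hd0 : d = 0 := by
      by_contra hd
      have i0 : Fin d := ⟨0, Nat.pos_of_ne_zero hd⟩
      have h1 : (1 : ℂ) = 0 := by
        rw [← hdiag i0, ← hsum i0 i0]
        refine Finset.sum_eq_zero fun k _ => ?_
        rw [hzero k (hall k) i0]
        ring
      exact one_ne_zero h1
    subst hd0
    apply subset_closure
    apply subset_convexHull
    refine ⟨fun _ => 1, fun i => i.elim0, ?_⟩
    ext i j
    exact i.elim0
  · have hrne : (r : ℝ) ≠ 0 := by positivity
    have key : (1 / (r : ℝ)) • C + (((r : ℝ) - 1) / r) • (1 : Matrix (Fin d) (Fin d) ℂ)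
        = ∑ k ∈ T, (1 / (r : ℝ)) • corrM (v k) := by
      ext i j
      simp only [Matrix.add_apply, Matrix.smul_apply, Matrix.sum_apply, Matrix.one_apply,
        corrM, Matrix.of_apply, Complex.real_smul]
      push_cast
      have hrC : ((r : ℂ)) ≠ 0 := by exact_mod_cast hrne
      rcases eq_or_ne i j with rfl | hij
      · simp only [if_true, hdiag i, mul_one]
        rw [Finset.sum_const, hTcard, nsmul_eq_mul]
        field_simp
        ring
      · simp only [if_neg hij]
        have hext : ∑ k ∈ T, v k i * star (v k j) = C i j := by
          rw [← hsum i j]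
          refine Finset.sum_subset (Finset.subset_univ T) ?_
          intro k _ hk
          rw [hT] at hk
          simp only [Finset.mem_filter, Finset.mem_univ, true_and, not_not] at hk
          rw [hzero k hk i]
          ring
        rw [← Finset.mul_sum, hext]
        ring
    rw [key]
    apply subset_closure
    have : convexHull ℝ (corrSet d) ⊆ convexHull ℝ {A : Matrix (Fin d) (Fin d) ℂ |
        ∃ z : Fin d → ℂ, (∀ i, ‖z i‖ = 1) ∧ A = Matrix.of fun i j => z i * star (z j)} := by
      exact le_of_eq rfl
    apply this
    refine (convex_convexHull ℝ (corrSet d)).sum_mem ?_ ?_ ?_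
    · intro k _
      positivity
    · rw [Finset.sum_const, hTcard, nsmul_eq_mul]
      field_simp
    · intro k _
      exact corrM_mem_convexHull (v k) (fun i => hle k i)
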